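/- arXiv:2312.08589 — 2 statements merged into one kernel-verified Lean document; each statement's English description precedes it below -/
import Mathlib

section
/- Sharpness as a multi-distribution f-divergence (Proposition 1): suppose π_i := μ(Y = e_i) > 0 for all i, let P be the law of g(X), and P_i the conditional law of g(X) given Y = e_i. Then SHARP_F(g) := E[D_F(E[Y|g(X)], E[Y])] = ∫ [ F(π_1·(dP_1/dP)(t), …, π_k·(dP_k/dP)(t)) − F(π_1, …, π_k) ] dP(t). -/
open MeasureTheory ProbabilityTheory
open scoped RealInnerProductSpace

/-- Bregman divergence generated by `F`. -/
noncomputable def breg {k : ℕ} (F : EuclideanSpace ℝ (Fin k) → ℝ)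
    (p q : EuclideanSpace ℝ (Fin k)) : ℝ :=
  F p - F q - ⟪gradient F q, p - q⟫

/-- The probability simplex in `ℝ^k`. -/
def simplexE (k : ℕ) : Set (EuclideanSpace ℝ (Fin k)) :=
  {p | (∀ i, 0 ≤ p i) ∧ ∑ i, p i = 1}

/-- A vector in `ℝ^k` given coordinatewise. -/
def vecE {k : ℕ} (f : Fin k → ℝ) : EuclideanSpace ℝ (Fin k) := WithLp.toLp 2 f

lemma euclid_sum_apply {k : ℕ} {ι : Type*} (s : Finset ι)
    (f : ι → EuclideanSpace ℝ (Fin k)) (j : Fin k) :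
    (∑ i ∈ s, f i) j = ∑ i ∈ s, f i j := by
  induction s using Finset.cons_induction with
  | empty => rfl
  | cons a s ha ih => simp [Finset.sum_cons, ih, PiLp.add_apply]

lemma vecE_eq_sum {k : ℕ} (f : Fin k → ℝ) :
    vecE f = ∑ i, f i • EuclideanSpace.single i (1:ℝ) := by
  ext j
  rw [euclid_sum_apply]
  simp [vecE, EuclideanSpace.single_apply]

lemma isCompact_simplexE (k : ℕ) : IsCompact (simplexE k) := by
  have h1 := isCompact_stdSimplex ℝ (Fin k)
  have h2 : Continuous ((EuclideanSpace.equiv (Fin k) ℝ).symm) :=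
    (EuclideanSpace.equiv (Fin k) ℝ).symm.continuous
  have h3 := h1.image h2
  convert h3 using 1
  ext p
  constructor
  · rintro ⟨hp, hs⟩
    exact ⟨p.ofLp, ⟨hp, hs⟩, rfl⟩
  · rintro ⟨q, ⟨hq1, hq2⟩, rfl⟩
    exact ⟨hq1, hq2⟩

lemma rnDeriv_finset_sum_ae {α : Type*} [MeasurableSpace α] (ν : Measure α) [SigmaFinite ν]
    {ι : Type*} (s : Finset ι) (ρ : ι → Measure α) [h : ∀ i, IsFiniteMeasure (ρ i)] :
    (∑ i ∈ s, ρ i).rnDeriv ν =ᵐ[ν] fun t => ∑ i ∈ s, (ρ i).rnDeriv ν t := by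
  classical
  induction s using Finset.cons_induction with
  | empty =>
    simp only [Finset.sum_empty]
    filter_upwards [Measure.rnDeriv_zero ν] with t ht
    simp [ht]
  | cons a s ha ih =>
    haveI : IsFiniteMeasure (∑ i ∈ s, ρ i) := by
      constructor
      rw [Measure.finset_sum_apply]
      exact ENNReal.sum_lt_top.mpr fun i _ => measure_lt_top _ _
    rw [Finset.sum_cons]
    have h1 := Measure.rnDeriv_add (ρ a) (∑ i ∈ s, ρ i) ν
    filter_upwards [h1, ih] with t ht1 ht2
    rw [ht1, Pi.add_apply, ht2, Finset.sum_cons]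

/-- Proposition 1: sharpness as a multi-distribution f-divergence:
`SHARP_F(g) = ∫ [F(π_1 (dP_1/dP)(t), …, π_k (dP_k/dP)(t)) − F(π_1,…,π_k)] dP(t)`. -/
theorem sharpness_as_f_divergence
    {Ω 𝒳 : Type*} [MeasurableSpace Ω] [MeasurableSpace 𝒳]
    (μ : Measure Ω) [IsProbabilityMeasure μ] {k : ℕ}
    (X : Ω → 𝒳) (Y : Ω → EuclideanSpace ℝ (Fin k))
    (g : 𝒳 → EuclideanSpace ℝ (Fin k))
    (F : EuclideanSpace ℝ (Fin k) → ℝ)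
    (hX : Measurable X) (hY : Measurable Y) (hg : Measurable g)
    (hYoh : ∀ ω, ∃ i, Y ω = EuclideanSpace.single i 1)
    (hgs : ∀ x, g x ∈ simplexE k)
    (hpos : ∀ i : Fin k, 0 < μ {ω | Y ω = EuclideanSpace.single i 1})
    (U : Set (EuclideanSpace ℝ (Fin k))) (hU : IsOpen U) (hUs : simplexE k ⊆ U)
    (hF : ConvexOn ℝ Set.univ F)
    (hFd : ∀ p ∈ U, DifferentiableAt ℝ F p)
    (hFc : ContinuousOn F (simplexE k))
    (hgFc : ContinuousOn (gradient F) (simplexE k)) :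
    ∫ ω, breg F
        ((μ[Y | MeasurableSpace.comap (fun ω' => g (X ω')) inferInstance]) ω)
        (∫ ω', Y ω' ∂μ) ∂μ
      = ∫ t,
          (F (vecE fun i =>
              (μ {ω' | Y ω' = EuclideanSpace.single i 1}).toReal *
                (((μ {ω' | Y ω' = EuclideanSpace.single i 1})⁻¹ •
                    (μ.restrict {ω' | Y ω' = EuclideanSpace.single i 1}).map
                      (fun ω' => g (X ω'))).rnDeriv
                  (μ.map (fun ω' => g (X ω'))) t).toReal)
            - F (vecE fun i => (μ {ω' | Y ω' = EuclideanSpace.single i 1}).toReal))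
          ∂(μ.map (fun ω' => g (X ω'))) := by
  classical
  set T : Ω → EuclideanSpace ℝ (Fin k) := fun ω' => g (X ω') with hTdef
  have hT : Measurable T := hg.comp hX
  have hm : MeasurableSpace.comap T inferInstance ≤ _ := hT.comap_le
  haveI : SigmaFinite (μ.trim hm) := inferInstance
  set e : Fin k → EuclideanSpace ℝ (Fin k) := fun i => EuclideanSpace.single i 1 with hedef
  set S : Fin k → Set Ω := fun i => {ω' | Y ω' = EuclideanSpace.single i 1} with hSdef
  have hSrw : ∀ i : Fin k, {ω' | Y ω' = EuclideanSpace.single i 1} = S i := fun i => rfl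
  simp only [hSrw]
  have hSm : ∀ i, MeasurableSet (S i) := fun i => hY (measurableSet_singleton _)
  set ν : Measure (EuclideanSpace ℝ (Fin k)) := μ.map T with hνdef
  haveI : IsProbabilityMeasure ν := Measure.isProbabilityMeasure_map hT.aemeasurable
  set ρ : Fin k → Measure (EuclideanSpace ℝ (Fin k)) :=
    fun i => (μ.restrict (S i)).map T with hρdef
  have hρrw : ∀ i : Fin k, (μ.restrict (S i)).map T = ρ i := fun i => rfl
  simp only [hρrw]
  haveI hρfin : ∀ i, IsFiniteMeasure (ρ i) :=
    fun i => Measure.isFiniteMeasure_map _ _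
  have hρ_ac : ∀ i, ρ i ≪ ν :=
    fun i => (Measure.map_mono Measure.restrict_le_self hT).absolutelyContinuous
  set c : Fin k → EuclideanSpace ℝ (Fin k) → ℝ :=
    fun i t => ((ρ i).rnDeriv ν t).toReal with hcdef
  have hc_meas : ∀ i, Measurable (c i) :=
    fun i => (Measure.measurable_rnDeriv _ _).ennreal_toReal
  have hc_int : ∀ i, Integrable (c i) ν := fun i => Measure.integrable_toReal_rnDeriv
  set h : EuclideanSpace ℝ (Fin k) → EuclideanSpace ℝ (Fin k) :=
    fun t => vecE (fun i => c i t) with hhdef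
  have hvec_sum : ∀ t, h t = ∑ i, c i t • e i := fun t => vecE_eq_sum _
  have hvec_meas : Measurable h := by
    have : Measurable (fun t => ∑ i, c i t • e i) :=
      Finset.measurable_sum _ fun i _ => (hc_meas i).smul_const (e i)
    rwa [show (fun t => ∑ i, c i t • e i) = h from (funext fun t => (hvec_sum t).symm)] at this
  have hvec_int : Integrable h ν := by
    have : Integrable (fun t => ∑ i, c i t • e i) ν :=
      integrable_finset_sum _ fun i _ => ((hc_int i).smul_const (e i))
    rwa [show (fun t => ∑ i, c i t • e i) = h from (funext fun t => (hvec_sum t).symm)] at this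
  -- injectivity of e
  have he_inj : Function.Injective e := by
    intro a b hab
    by_contra hne
    have h1 : e a a = 1 := by simp [hedef, EuclideanSpace.single_apply]
    have h2 : e b a = 0 := by simp [hedef, EuclideanSpace.single_apply, hne]
    rw [hab, h2] at h1
    norm_num at h1
  -- one-hot representation of Y
  have hYrep : ∀ ω, Y ω = ∑ i, (S i).indicator (fun _ => (1:ℝ)) ω • e i := by
    intro ω
    obtain ⟨j, hj⟩ := hYoh ω
    ext i
    rw [euclid_sum_apply]
    have hSmem : ∀ l, ω ∈ S l ↔ l = j := by
      intro l
      simp only [hSdef, Set.mem_setOf_eq, hj]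
      constructor
      · intro hlj; exact (he_inj hlj.symm)
      · rintro rfl; rfl
    have : ∀ l, ((S l).indicator (fun _ => (1:ℝ)) ω • e l) i
        = (if l = j then (1:ℝ) else 0) * (if i = l then 1 else 0) := by
      intro l
      rw [PiLp.smul_apply]
      simp [Set.indicator_apply, hSmem l, hedef, EuclideanSpace.single_apply, smul_eq_mul]
    simp only [this]
    rw [hj]
    simp only [EuclideanSpace.single_apply, Finset.sum_ite_eq, Finset.mem_univ, if_true,
      ite_mul, one_mul, zero_mul]
    by_cases hij : i = j <;> simp [hij, eq_comm]
  have hY_int : Integrable Y μ := by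
    have : Integrable (fun ω => ∑ i, (S i).indicator (fun _ => (1:ℝ)) ω • e i) μ :=
      integrable_finset_sum _ fun i _ =>
        ((integrable_const (1:ℝ)).indicator (hSm i)).smul_const (e i)
    rwa [show (fun ω => ∑ i, (S i).indicator (fun _ => (1:ℝ)) ω • e i) = Y from
      (funext fun ω => (hYrep ω).symm)] at this
  -- value of ∫ Y
  have hq : ∫ ω', Y ω' ∂μ = vecE (fun i => (μ (S i)).toReal) := by
    rw [vecE_eq_sum]
    simp_rw [hYrep]
    rw [integral_finset_sum _ (fun i _ =>
      ((integrable_const (1:ℝ)).indicator (hSm i)).smul_const (e i))]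
    refine Finset.sum_congr rfl fun i _ => ?_
    rw [integral_smul_const, integral_indicator_const (1:ℝ) (hSm i), smul_eq_mul, mul_one]
    rfl
  -- partition facts
  have hdisj : Pairwise (Function.onFun Disjoint S) := by
    intro a b hab
    rw [Function.onFun, Set.disjoint_left]
    intro ω ha hb
    have ha' : Y ω = e a := ha
    have hb' : Y ω = e b := hb
    exact hab (he_inj (ha'.symm.trans hb'))
  have hcover : (⋃ i, S i) = Set.univ := by
    ext ω
    simp only [Set.mem_iUnion, Set.mem_univ, iff_true, hSdef, Set.mem_setOf_eq]
    exact hYoh ω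
  have hν_sum : ν = ∑ i, ρ i := by
    ext A hA
    rw [Measure.finset_sum_apply]
    have hρA : ∀ i, ρ i A = μ (T ⁻¹' A ∩ S i) := by
      intro i
      rw [hρdef]
      rw [Measure.map_apply hT hA, Measure.restrict_apply (hT hA)]
    simp_rw [hρA]
    have key : μ (T ⁻¹' A) = ∑ i, μ (T ⁻¹' A ∩ S i) := by
      have huni : T ⁻¹' A = ⋃ i, T ⁻¹' A ∩ S i := by
        rw [← Set.inter_iUnion, hcover, Set.inter_univ]
      conv_lhs => rw [huni]
      rw [measure_iUnion
        (fun a b hab => Disjoint.mono Set.inter_subset_right Set.inter_subset_right (hdisj hab))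
        (fun i => (hT hA).inter (hSm i)), tsum_fintype]
    rw [hνdef, Measure.map_apply hT hA, key]
  have hsum_one : ∀ᵐ t ∂ν, ∑ i, c i t = 1 := by
    have h1 := rnDeriv_finset_sum_ae ν Finset.univ ρ
    rw [← hν_sum] at h1
    have h2 := Measure.rnDeriv_self ν
    have h3 : ∀ᵐ t ∂ν, ∀ i, (ρ i).rnDeriv ν t < ⊤ :=
      ae_all_iff.mpr fun i => Measure.rnDeriv_lt_top (ρ i) ν
    filter_upwards [h1, h2, h3] with t ht1 ht2 ht3
    have : ∑ i, c i t = ((∑ i, (ρ i).rnDeriv ν t)).toReal := by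
      rw [ENNReal.toReal_sum fun i _ => (ht3 i).ne]
    rw [this, ← ht1, ht2]
    simp
  have hmem : ∀ᵐ t ∂ν, h t ∈ simplexE k := by
    filter_upwards [hsum_one] with t ht
    exact ⟨fun i => ENNReal.toReal_nonneg (a := (ρ i).rnDeriv ν t), ht⟩
  have hFcont : Continuous F := by
    have := hF.continuousOn isOpen_univ
    rwa [continuousOn_univ] at this
  obtain ⟨C, hC⟩ := (isCompact_simplexE k).exists_bound_of_continuousOn hFcont.continuousOn
  have hFh_int : Integrable (fun t => F (h t)) ν := by
    refine Integrable.mono' (integrable_const C)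
      ((hFcont.measurable.comp hvec_meas).aestronglyMeasurable) ?_
    filter_upwards [hmem] with t ht
    exact hC _ ht
  -- integrability of composites with T
  have hcomp_int : Integrable (fun ω => h (T ω)) μ :=
    (integrable_map_measure hvec_meas.aestronglyMeasurable hT.aemeasurable).mp hvec_int
  have hciT_int : ∀ i, Integrable (fun ω => c i (T ω)) μ := fun i =>
    (integrable_map_measure (hc_meas i).aestronglyMeasurable hT.aemeasurable).mp (hc_int i)
  -- conditional expectation identification
  have hCE : (fun ω => h (T ω)) =ᵐ[μ] μ[Y | MeasurableSpace.comap T inferInstance] := by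
    refine ae_eq_condExp_of_forall_setIntegral_eq hm hY_int
      (fun s _ _ => hcomp_int.integrableOn) ?_ ?_
    · rintro s ⟨A, hA, rfl⟩ -
      have hLHS : ∫ ω in T ⁻¹' A, h (T ω) ∂μ = ∑ i, (ρ i A).toReal • e i := by
        simp_rw [hvec_sum]
        rw [integral_finset_sum _ (fun i _ => ((hciT_int i).smul_const (e i)).integrableOn)]
        refine Finset.sum_congr rfl fun i _ => ?_
        rw [integral_smul_const]
        congr 1
        have := setIntegral_map (μ := μ) (g := T) (f := c i) hA
          ((hc_meas i).aestronglyMeasurable) hT.aemeasurable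
        rw [← this, hcdef]
        exact Measure.setIntegral_toReal_rnDeriv (hρ_ac i) A
      have hRHS : ∫ ω in T ⁻¹' A, Y ω ∂μ = ∑ i, (ρ i A).toReal • e i := by
        simp_rw [hYrep]
        rw [integral_finset_sum _ (fun i _ =>
          (((integrable_const (1:ℝ)).indicator (hSm i)).smul_const (e i)).integrableOn)]
        refine Finset.sum_congr rfl fun i _ => ?_
        rw [integral_smul_const]
        congr 1
        rw [setIntegral_indicator (hSm i), setIntegral_const, smul_eq_mul, mul_one]
        congr 1
        rw [hρdef, Measure.map_apply hT hA, Measure.restrict_apply (hT hA)]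
        rfl
      rw [hLHS, hRHS]
    · have hTm : Measurable[MeasurableSpace.comap T inferInstance] T := Measurable.of_comap_le le_rfl
      exact ((hvec_meas.comp hTm).stronglyMeasurable).aestronglyMeasurable
  set q : EuclideanSpace ℝ (Fin k) := ∫ ω', Y ω' ∂μ with hqdef
  have hinth : ∫ t, h t ∂ν = q := by
    rw [hνdef, integral_map hT.aemeasurable hvec_meas.aestronglyMeasurable]
    rw [integral_congr_ae hCE]
    exact integral_condExp hm
  -- compute LHS
  have hbreg_meas : Measurable (fun t => breg F (h t) q) := by
    simp only [breg]
    exact ((hFcont.measurable.comp hvec_meas).sub measurable_const).sub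
      (measurable_const.inner (hvec_meas.sub measurable_const))
  have hL : ∫ ω, breg F ((μ[Y | MeasurableSpace.comap T inferInstance]) ω) q ∂μ = ∫ t, F (h t) ∂ν - F q := by
    have hae' : (fun ω => breg F ((μ[Y | MeasurableSpace.comap T inferInstance]) ω) q)
        =ᵐ[μ] fun ω => breg F (h (T ω)) q := by
      filter_upwards [hCE] with ω hω
      rw [← hω]
    have step1 : ∫ ω, breg F ((μ[Y | MeasurableSpace.comap T inferInstance]) ω) q ∂μ
        = ∫ ω, breg F (h (T ω)) q ∂μ := integral_congr_ae hae'
    have step2 : ∫ ω, breg F (h (T ω)) q ∂μ = ∫ t, breg F (h t) q ∂ν := by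
      rw [hνdef, integral_map hT.aemeasurable hbreg_meas.aestronglyMeasurable]
    rw [step1, step2]
    simp only [breg]
    have hsub1 : Integrable (fun t => h t - q) ν := hvec_int.sub (integrable_const q)
    have hIin : Integrable (fun t => ⟪gradient F q, h t - q⟫) ν := hsub1.const_inner _
    have hsub2 : Integrable (fun t => F (h t) - F q) ν := hFh_int.sub (integrable_const (F q))
    rw [integral_sub hsub2 hIin,
      integral_sub hFh_int (integrable_const (F q)),
      integral_inner hsub1,
      integral_sub hvec_int (integrable_const q)]
    rw [integral_const, integral_const, probReal_univ, one_smul, one_smul,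
      hinth, sub_self, inner_zero_right, sub_zero]
  -- a.e. identification of the density vector
  have hπne : ∀ i, μ (S i) ≠ 0 := fun i => (hpos i).ne'
  have hπtop : ∀ i, μ (S i) ≠ ⊤ := fun i => measure_ne_top μ _
  have haess : ∀ᵐ t ∂ν,
      (vecE fun i => (μ (S i)).toReal * (((μ (S i))⁻¹ • ρ i).rnDeriv ν t).toReal) = h t := by
    have hsm : ∀ i, ((μ (S i))⁻¹ • ρ i).rnDeriv ν =ᵐ[ν]
        (μ (S i))⁻¹ • (ρ i).rnDeriv ν :=
      fun i => Measure.rnDeriv_smul_left_of_ne_top (ρ i) ν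
        (by simp [ENNReal.inv_ne_top, hπne i])
    filter_upwards [ae_all_iff.mpr hsm] with t ht
    ext i
    change (μ (S i)).toReal * (((μ (S i))⁻¹ • ρ i).rnDeriv ν t).toReal = c i t
    rw [ht i, Pi.smul_apply, smul_eq_mul, ENNReal.toReal_mul, ENNReal.toReal_inv,
      ← mul_assoc, mul_inv_cancel₀ (ENNReal.toReal_ne_zero.mpr ⟨hπne i, hπtop i⟩), one_mul]
  have hR : ∫ t,
      (F (vecE fun i => (μ (S i)).toReal * (((μ (S i))⁻¹ • ρ i).rnDeriv ν t).toReal)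
        - F (vecE fun i => (μ (S i)).toReal)) ∂ν
      = ∫ t, F (h t) ∂ν - F q := by
    have hcong : (fun t =>
        F (vecE fun i => (μ (S i)).toReal * (((μ (S i))⁻¹ • ρ i).rnDeriv ν t).toReal)
          - F (vecE fun i => (μ (S i)).toReal)) =ᵐ[ν] fun t => F (h t) - F q := by
      filter_upwards [haess] with t ht
      rw [ht, ← hq, hqdef]
    rw [integral_congr_ae hcong, integral_sub hFh_int (integrable_const (F q)),
      integral_const, probReal_univ, one_smul]
  exact hL.trans hR.symm
end

section
/- Sharpness is bounded by statistical information: SHARP_F(g) := E[D_F(E[Y|g(X)], E[Y])] ≤ E[F(E[Y|X])] − F(E[Y]) for every measurable classifier g : 𝒳 → Δ^k. -/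
open MeasureTheory ProbabilityTheory
open scoped RealInnerProductSpace

section Aux

variable {k : ℕ}

lemma abs_apply_le_norm (x : EuclideanSpace ℝ (Fin k)) (i : Fin k) : |x i| ≤ ‖x‖ := by
  have h := abs_real_inner_le_norm (EuclideanSpace.single i (1 : ℝ)) x
  simpa [EuclideanSpace.inner_single_left, EuclideanSpace.norm_single] using h

lemma simplexE_norm_le {p : EuclideanSpace ℝ (Fin k)} (hp : p ∈ simplexE k) : ‖p‖ ≤ 1 := by
  obtain ⟨h0, h1⟩ := hp
  have hle : ∀ i, p i ≤ 1 := by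
    intro i
    calc p i ≤ ∑ j, p j := Finset.single_le_sum (fun j _ => h0 j) (Finset.mem_univ i)
    _ = 1 := h1
  rw [EuclideanSpace.norm_eq]
  have : ∑ i, ‖p i‖ ^ 2 ≤ 1 := by
    calc ∑ i, ‖p i‖ ^ 2 ≤ ∑ i, p i := by
          refine Finset.sum_le_sum fun i _ => ?_
          rw [Real.norm_eq_abs, sq_abs]
          nlinarith [h0 i, hle i]
    _ = 1 := h1
  calc Real.sqrt (∑ i, ‖p i‖ ^ 2) ≤ Real.sqrt 1 := Real.sqrt_le_sqrt this
  _ = 1 := Real.sqrt_one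

lemma simplexE_isCompact : IsCompact (simplexE k) := by
  refine Metric.isCompact_of_isClosed_isBounded ?_ ?_
  · have : simplexE k =
        (⋂ i, {p : EuclideanSpace ℝ (Fin k) | 0 ≤ p i}) ∩
          {p : EuclideanSpace ℝ (Fin k) | ∑ i, p i = 1} := by
      ext p; simp [simplexE, Set.mem_iInter]
    rw [this]
    exact (isClosed_iInter fun i =>
        isClosed_le continuous_const (EuclideanSpace.proj i).continuous).inter
      (isClosed_eq (continuous_finset_sum _ fun i _ => (EuclideanSpace.proj i).continuous)
        continuous_const)
  · refine (Metric.isBounded_closedBall (x := (0 : EuclideanSpace ℝ (Fin k))) (r := 1)).subset ?_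
    intro p hp
    simpa [Metric.mem_closedBall, dist_zero_right] using simplexE_norm_le hp

/-- The gradient inequality for convex functions. -/
lemma inner_gradient_le_sub {F : EuclideanSpace ℝ (Fin k) → ℝ}
    (hF : ConvexOn ℝ Set.univ F) {q : EuclideanSpace ℝ (Fin k)}
    (hq : DifferentiableAt ℝ F q) (p : EuclideanSpace ℝ (Fin k)) :
    ⟪gradient F q, p - q⟫ ≤ F p - F q := by
  have hc : HasDerivAt (fun t : ℝ => q + t • (p - q)) (p - q) 0 := by
    simpa using ((hasDerivAt_id (0 : ℝ)).smul_const (p - q)).const_add q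
  have hc0 : (fun t : ℝ => q + t • (p - q)) 0 = q := by simp
  have hφ : HasDerivAt (fun t : ℝ => F (q + t • (p - q))) (fderiv ℝ F q (p - q)) 0 := by
    have h := HasFDerivAt.comp_hasDerivAt (l := F) 0 (hc0 ▸ hq.hasFDerivAt) hc
    rw [hc0] at h
    exact h
  have hconv : ConvexOn ℝ Set.univ fun t : ℝ => F (q + t • (p - q)) := by
    have haff := hF.comp_affineMap (AffineMap.lineMap q p : ℝ →ᵃ[ℝ] EuclideanSpace ℝ (Fin k))
    have heq : (F ∘ (AffineMap.lineMap q p : ℝ →ᵃ[ℝ] EuclideanSpace ℝ (Fin k)))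
        = fun t : ℝ => F (q + t • (p - q)) := by
      funext t
      simp [Function.comp, AffineMap.lineMap_apply, add_comm]
    rw [Set.preimage_univ, heq] at haff
    exact haff
  have hsl := hconv.le_slope_of_hasDerivAt (Set.mem_univ (0 : ℝ)) (Set.mem_univ 1) one_pos hφ
  have e1 : q + (1 : ℝ) • (p - q) = p := by rw [one_smul]; abel
  have e0 : q + (0 : ℝ) • (p - q) = q := by simp
  rw [slope_def_field] at hsl
  simp only [e1, e0, sub_zero, div_one] at hsl
  have hg : ⟪gradient F q, p - q⟫ = fderiv ℝ F q (p - q) := by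
    rw [← InnerProductSpace.toDual_apply_apply]
    show (InnerProductSpace.toDual ℝ (EuclideanSpace ℝ (Fin k)))
        ((InnerProductSpace.toDual ℝ (EuclideanSpace ℝ (Fin k))).symm (fderiv ℝ F q)) (p - q) = _
    rw [LinearIsometryEquiv.apply_symm_apply]
  rw [hg]
  exact hsl

variable {Ω : Type*} {m m0 : MeasurableSpace Ω} {μ : Measure Ω}

/-- Conditional expectation commutes with continuous linear maps. -/
lemma condexp_clm (hm : m ≤ m0) [IsFiniteMeasure μ]
    {E F' : Type*} [NormedAddCommGroup E] [NormedSpace ℝ E] [CompleteSpace E]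
    [NormedAddCommGroup F'] [NormedSpace ℝ F'] [CompleteSpace F']
    (L : E →L[ℝ] F') {f : Ω → E} (hf : Integrable f μ) :
    (μ[fun ω => L (f ω)|m]) =ᵐ[μ] fun ω => L ((μ[f|m]) ω) := by
  haveI : SigmaFinite (μ.trim hm) := (isFiniteMeasure_trim hm).toSigmaFinite
  refine (ae_eq_condExp_of_forall_setIntegral_eq hm (L.integrable_comp hf) ?_ ?_ ?_).symm
  · intro s _ _
    exact (L.integrable_comp integrable_condExp).integrableOn
  · intro s hs _
    rw [L.integral_comp_comm integrable_condExp.integrableOn,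
      L.integral_comp_comm hf.integrableOn, setIntegral_condExp hm hf hs]
  · exact (L.continuous.comp_stronglyMeasurable (stronglyMeasurable_condExp (m := m) (μ := μ) (f := f))).aestronglyMeasurable

lemma condexp_apply_coord (hm : m ≤ m0) [IsFiniteMeasure μ]
    {Y : Ω → EuclideanSpace ℝ (Fin k)} (hYi : Integrable Y μ) (i : Fin k) :
    (fun ω => (μ[Y|m]) ω i) =ᵐ[μ] μ[fun ω => Y ω i|m] := by
  have h := condexp_clm hm (EuclideanSpace.proj (𝕜 := ℝ) i) hYi
  simpa [PiLp.proj_apply] using h.symm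

lemma condexp_mem_simplex (hm : m ≤ m0) [IsProbabilityMeasure μ]
    {Y : Ω → EuclideanSpace ℝ (Fin k)} (hYi : Integrable Y μ)
    (hYs : ∀ ω, Y ω ∈ simplexE k) :
    ∀ᵐ ω ∂μ, (μ[Y|m]) ω ∈ simplexE k := by
  haveI : SigmaFinite (μ.trim hm) := (isFiniteMeasure_trim hm).toSigmaFinite
  have hYiInt : ∀ i : Fin k, Integrable (fun ω => Y ω i) μ := fun i => by
    simpa [PiLp.proj_apply] using (EuclideanSpace.proj (𝕜 := ℝ) i).integrable_comp hYi
  have hnn : ∀ i : Fin k, ∀ᵐ ω ∂μ, 0 ≤ (μ[Y|m]) ω i := by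
    intro i
    have h1 := condexp_apply_coord hm hYi i
    have h2 : 0 ≤ᵐ[μ] μ[fun ω => Y ω i|m] :=
      condExp_nonneg (ae_of_all μ fun ω => (hYs ω).1 i)
    filter_upwards [h1, h2] with ω hω1 hω2
    rw [hω1]; exact hω2
  have hsum : ∀ᵐ ω ∂μ, ∑ i, (μ[Y|m]) ω i = 1 := by
    have h1 : (μ[fun ω => ∑ i, Y ω i|m]) =ᵐ[μ] fun _ => (1 : ℝ) := by
      have he : (fun ω => ∑ i : Fin k, Y ω i) = fun _ => (1 : ℝ) :=
        funext fun ω => (hYs ω).2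
      rw [he]
      exact Filter.EventuallyEq.of_eq (condExp_const hm (1 : ℝ))
    have h2 : (μ[fun ω => ∑ i, Y ω i|m]) =ᵐ[μ] fun ω => ∑ i, (μ[Y|m]) ω i := by
      have he : (fun ω => ∑ i : Fin k, Y ω i)
          = ∑ i : Fin k, fun ω => Y ω i := by
        funext ω; simp
      have h3 := condExp_finsetSum (μ := μ) (m := m) (s := Finset.univ)
        (f := fun (i : Fin k) ω => Y ω i) (fun i _ => hYiInt i)
      rw [he]
      refine h3.trans ?_
      have h4 : ∀ i : Fin k, (μ[fun ω => Y ω i|m]) =ᵐ[μ] fun ω => (μ[Y|m]) ω i :=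
        fun i => (condexp_apply_coord hm hYi i).symm
      have h5 : ∀ᵐ ω ∂μ, ∀ i : Fin k, (μ[fun ω' => Y ω' i|m]) ω = (μ[Y|m]) ω i :=
        (MeasureTheory.ae_all_iff).2 h4
      filter_upwards [h5] with ω hω
      simp only [Finset.sum_apply]
      exact Finset.sum_congr rfl fun i _ => hω i
    filter_upwards [h1.symm.trans h2] with ω hω
    rw [← hω]
  have hall : ∀ᵐ ω ∂μ, ∀ i : Fin k, 0 ≤ (μ[Y|m]) ω i := (MeasureTheory.ae_all_iff).2 hnn
  filter_upwards [hall, hsum] with ω h1 h2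
  exact ⟨h1, h2⟩

/-- Pull-out property for integrals against bounded `m`-measurable functions. -/
lemma integral_mul_condexp (hm : m ≤ m0) [IsFiniteMeasure μ]
    {W h : Ω → ℝ} (hW : StronglyMeasurable[m] W) {C : ℝ}
    (hWb : ∀ᵐ ω ∂μ, |W ω| ≤ C) (hh : Integrable h μ) :
    ∫ ω, W ω * (μ[h|m]) ω ∂μ = ∫ ω, W ω * h ω ∂μ := by
  haveI : SigmaFinite (μ.trim hm) := (isFiniteMeasure_trim hm).toSigmaFinite
  have hWae : AEStronglyMeasurable W μ := (hW.mono hm).aestronglyMeasurable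
  have hWb' : ∀ᵐ ω ∂μ, ‖W ω‖ ≤ C := by
    filter_upwards [hWb] with ω hω using by rwa [Real.norm_eq_abs]
  have hWh : Integrable (fun ω => W ω * h ω) μ := hh.bdd_mul hWae hWb'
  have hpull := condExp_mul_of_stronglyMeasurable_left hW hWh hh
  calc ∫ ω, W ω * (μ[h|m]) ω ∂μ = ∫ ω, (μ[W * h|m]) ω ∂μ := by
        refine integral_congr_ae ?_
        filter_upwards [hpull] with ω hω
        exact hω.symm
  _ = ∫ ω, (W * h) ω ∂μ := integral_condExp hm
  _ = ∫ ω, W ω * h ω ∂μ := rfl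

end Aux

lemma aux_main {Ω : Type*} {m1 m2 : MeasurableSpace Ω} [mΩ : MeasurableSpace Ω]
    (μ : Measure Ω) [IsProbabilityMeasure μ] {k : ℕ}
    (hm1 : m1 ≤ mΩ) (hm2 : m2 ≤ mΩ) (hm12 : m1 ≤ m2)
    (Y : Ω → EuclideanSpace ℝ (Fin k))
    (F : EuclideanSpace ℝ (Fin k) → ℝ)
    (hY : Measurable Y)
    (hYoh : ∀ ω, ∃ i, Y ω = EuclideanSpace.single i 1)
    (U : Set (EuclideanSpace ℝ (Fin k))) (hU : IsOpen U) (hUs : simplexE k ⊆ U)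
    (hF : ConvexOn ℝ Set.univ F)
    (hFd : ∀ p ∈ U, DifferentiableAt ℝ F p)
    (hFc : ContinuousOn F (simplexE k))
    (hgFc : ContinuousOn (gradient F) (simplexE k)) :
    ∫ ω, breg F ((μ[Y|m1]) ω) (∫ ω', Y ω' ∂μ) ∂μ
      ≤ (∫ ω, F ((μ[Y|m2]) ω) ∂μ) - F (∫ ω', Y ω' ∂μ) := by
  classical
  haveI : SigmaFinite (μ.trim hm1) := (isFiniteMeasure_trim hm1).toSigmaFinite
  haveI : SigmaFinite (μ.trim hm2) := (isFiniteMeasure_trim hm2).toSigmaFinite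
  set Z1 := μ[Y|m1] with hZ1def
  set Z2 := μ[Y|m2] with hZ2def
  set yb := ∫ ω', Y ω' ∂μ with hybdef
  -- Y lands in the simplex and is bounded
  have hYs : ∀ ω, Y ω ∈ simplexE k := by
    intro ω
    obtain ⟨i, hi⟩ := hYoh ω
    rw [hi]
    constructor
    · intro j
      rw [EuclideanSpace.single_apply]
      split <;> norm_num
    · simp [EuclideanSpace.single_apply]
  have hYint : Integrable Y μ := by
    refine ⟨hY.aestronglyMeasurable, HasFiniteIntegral.of_bounded (C := 1) ?_⟩
    refine ae_of_all μ fun ω => ?_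
    obtain ⟨i, hi⟩ := hYoh ω
    rw [hi, EuclideanSpace.norm_single]
    norm_num
  have hZ1int : Integrable Z1 μ := integrable_condExp
  have hZ2int : Integrable Z2 μ := integrable_condExp
  have hZ1s : ∀ᵐ ω ∂μ, Z1 ω ∈ simplexE k := condexp_mem_simplex hm1 hYint hYs
  have hZ2s : ∀ᵐ ω ∂μ, Z2 ω ∈ simplexE k := condexp_mem_simplex hm2 hYint hYs
  -- continuity of F, boundedness on simplex
  have hFcont : Continuous F := by
    rw [← continuousOn_univ]
    exact hF.continuousOn isOpen_univ
  obtain ⟨CF, hCF⟩ := simplexE_isCompact.exists_bound_of_continuousOn hFc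
  obtain ⟨CG, hCG⟩ := simplexE_isCompact.exists_bound_of_continuousOn hgFc
  -- integrability of F ∘ Z
  have intFZ1 : Integrable (fun ω => F (Z1 ω)) μ := by
    refine ⟨hFcont.comp_aestronglyMeasurable
      (stronglyMeasurable_condExp.mono hm1).aestronglyMeasurable,
      HasFiniteIntegral.of_bounded (C := CF) ?_⟩
    filter_upwards [hZ1s] with ω hω using hCF _ hω
  have intFZ2 : Integrable (fun ω => F (Z2 ω)) μ := by
    refine ⟨hFcont.comp_aestronglyMeasurable
      (stronglyMeasurable_condExp.mono hm2).aestronglyMeasurable,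
      HasFiniteIntegral.of_bounded (C := CF) ?_⟩
    filter_upwards [hZ2s] with ω hω using hCF _ hω
  -- the gradient field W along Z1
  set W := fun ω => gradient F (Z1 ω) with hWdef
  have hgradMeas : Measurable (gradient F) := by
    have h : Measurable fun x : EuclideanSpace ℝ (Fin k) =>
        (InnerProductSpace.toDual ℝ (EuclideanSpace ℝ (Fin k))).symm (fderiv ℝ F x) :=
      (InnerProductSpace.toDual ℝ
        (EuclideanSpace ℝ (Fin k))).symm.continuous.measurable.comp (measurable_fderiv ℝ F)
    exact h
  have hWm1 : Measurable[m1] W := hgradMeas.comp stronglyMeasurable_condExp.measurable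
  have hWb : ∀ᵐ ω ∂μ, ‖W ω‖ ≤ CG := by
    filter_upwards [hZ1s] with ω hω using hCG _ hω
  have hWi_b : ∀ i : Fin k, ∀ᵐ ω ∂μ, |W ω i| ≤ CG := by
    intro i
    filter_upwards [hWb] with ω hω
    exact (abs_apply_le_norm (W ω) i).trans hω
  have hWi_sm : ∀ i : Fin k, StronglyMeasurable[m1] fun ω => W ω i := fun i =>
    ((EuclideanSpace.proj (𝕜 := ℝ) i).continuous.measurable.comp hWm1).stronglyMeasurable
  -- coordinates
  have hYiInt : ∀ i : Fin k, Integrable (fun ω => Y ω i) μ := fun i => by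
    simpa [PiLp.proj_apply] using (EuclideanSpace.proj (𝕜 := ℝ) i).integrable_comp hYint
  have hZ1iInt : ∀ i : Fin k, Integrable (fun ω => Z1 ω i) μ := fun i => by
    simpa [PiLp.proj_apply] using
      (EuclideanSpace.proj (𝕜 := ℝ) i).integrable_comp hZ1int
  have hZ2iInt : ∀ i : Fin k, Integrable (fun ω => Z2 ω i) μ := fun i => by
    simpa [PiLp.proj_apply] using
      (EuclideanSpace.proj (𝕜 := ℝ) i).integrable_comp hZ2int
  -- key: ∫ Wᵢ Z2ᵢ = ∫ Wᵢ Z1ᵢ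
  have hkey : ∀ i : Fin k, ∫ ω, W ω i * Z2 ω i ∂μ = ∫ ω, W ω i * Z1 ω i ∂μ := by
    intro i
    have h2 : ∫ ω, W ω i * Z2 ω i ∂μ = ∫ ω, W ω i * Y ω i ∂μ := by
      have hc := condexp_apply_coord hm2 hYint i
      calc ∫ ω, W ω i * Z2 ω i ∂μ
          = ∫ ω, W ω i * (μ[fun ω' => Y ω' i|m2]) ω ∂μ := by
            refine integral_congr_ae ?_
            filter_upwards [hc] with ω hω
            rw [hZ2def, hω]
      _ = ∫ ω, W ω i * Y ω i ∂μ :=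
            integral_mul_condexp hm2 ((hWi_sm i).mono hm12) (hWi_b i) (hYiInt i)
    have h1 : ∫ ω, W ω i * Z1 ω i ∂μ = ∫ ω, W ω i * Y ω i ∂μ := by
      have hc := condexp_apply_coord hm1 hYint i
      calc ∫ ω, W ω i * Z1 ω i ∂μ
          = ∫ ω, W ω i * (μ[fun ω' => Y ω' i|m1]) ω ∂μ := by
            refine integral_congr_ae ?_
            filter_upwards [hc] with ω hω
            rw [hZ1def, hω]
      _ = ∫ ω, W ω i * Y ω i ∂μ :=
            integral_mul_condexp hm1 (hWi_sm i) (hWi_b i) (hYiInt i)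
    rw [h1, h2]
  -- inner product expansion
  have hexp : ∀ ω, ⟪W ω, Z2 ω - Z1 ω⟫ = ∑ i, W ω i * (Z2 ω i - Z1 ω i) := by
    intro ω
    rw [PiLp.inner_apply]
    refine Finset.sum_congr rfl fun i _ => ?_
    simp [RCLike.inner_apply]; ring
  have hint_i : ∀ i : Fin k, Integrable (fun ω => W ω i * (Z2 ω i - Z1 ω i)) μ := by
    intro i
    refine Integrable.bdd_mul (c := CG) ((hZ2iInt i).sub (hZ1iInt i))
      ((hWi_sm i).mono hm1).aestronglyMeasurable ?_
    filter_upwards [hWi_b i] with ω hω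
    rwa [Real.norm_eq_abs]
  have hInnerInt : Integrable (fun ω => ⟪W ω, Z2 ω - Z1 ω⟫) μ := by
    have he : (fun ω => ⟪W ω, Z2 ω - Z1 ω⟫)
        = fun ω => ∑ i, W ω i * (Z2 ω i - Z1 ω i) := funext hexp
    rw [he]
    exact integrable_finset_sum _ fun i _ => hint_i i
  have hinner0 : ∫ ω, ⟪W ω, Z2 ω - Z1 ω⟫ ∂μ = 0 := by
    have he : (fun ω => ⟪W ω, Z2 ω - Z1 ω⟫)
        = fun ω => ∑ i, W ω i * (Z2 ω i - Z1 ω i) := funext hexp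
    rw [he, integral_finset_sum _ fun i _ => hint_i i]
    refine Finset.sum_eq_zero fun i _ => ?_
    have hprod2 : Integrable (fun ω => W ω i * Z2 ω i) μ := by
      refine Integrable.bdd_mul (c := CG) (hZ2iInt i) ((hWi_sm i).mono hm1).aestronglyMeasurable ?_
      filter_upwards [hWi_b i] with ω hω
      rwa [Real.norm_eq_abs]
    have hprod1 : Integrable (fun ω => W ω i * Z1 ω i) μ := by
      refine Integrable.bdd_mul (c := CG) (hZ1iInt i) ((hWi_sm i).mono hm1).aestronglyMeasurable ?_
      filter_upwards [hWi_b i] with ω hω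
      rwa [Real.norm_eq_abs]
    have he2 : (fun ω => W ω i * (Z2 ω i - Z1 ω i))
        = fun ω => W ω i * Z2 ω i - W ω i * Z1 ω i := by
      funext ω; ring
    rw [he2, integral_sub hprod2 hprod1, hkey i, sub_self]
  -- main inequality between E[F∘Z1] and E[F∘Z2]
  have hmain : ∫ ω, F (Z1 ω) ∂μ ≤ ∫ ω, F (Z2 ω) ∂μ := by
    have hpt : ∀ᵐ ω ∂μ, F (Z1 ω) + ⟪W ω, Z2 ω - Z1 ω⟫ ≤ F (Z2 ω) := by
      filter_upwards [hZ1s, hZ2s] with ω h1 _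
      have hgi := inner_gradient_le_sub hF (hFd _ (hUs h1)) (Z2 ω)
      linarith
    calc ∫ ω, F (Z1 ω) ∂μ
        = (∫ ω, F (Z1 ω) ∂μ) + ∫ ω, ⟪W ω, Z2 ω - Z1 ω⟫ ∂μ := by
          rw [hinner0, add_zero]
    _ = ∫ ω, (F (Z1 ω) + ⟪W ω, Z2 ω - Z1 ω⟫) ∂μ := (integral_add intFZ1 hInnerInt).symm
    _ ≤ ∫ ω, F (Z2 ω) ∂μ := integral_mono_ae (intFZ1.add hInnerInt) intFZ2 hpt
  -- compute the left-hand side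
  have hZ1avg : ∫ ω, Z1 ω ∂μ = yb := integral_condExp hm1
  have hgi : Integrable (fun ω => ⟪gradient F yb, Z1 ω - yb⟫) μ := by
    have h := (innerSL ℝ (gradient F yb)).integrable_comp (hZ1int.sub (integrable_const yb))
    simpa [innerSL_apply_apply] using h
  have hdiff : Integrable (fun ω => F (Z1 ω) - F yb) μ :=
    intFZ1.sub (integrable_const (F yb))
  have hzero : ∫ ω, ⟪gradient F yb, Z1 ω - yb⟫ ∂μ = 0 := by
    have h4 : ∫ ω, (Z1 ω - yb) ∂μ = 0 := by
      calc ∫ ω, (Z1 ω - yb) ∂μ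
          = (∫ ω, Z1 ω ∂μ) - ∫ (_ : Ω), yb ∂μ :=
            integral_sub hZ1int (integrable_const yb)
      _ = 0 := by rw [hZ1avg, integral_const]; simp
    calc ∫ ω, ⟪gradient F yb, Z1 ω - yb⟫ ∂μ
        = ⟪gradient F yb, ∫ ω, (Z1 ω - yb) ∂μ⟫ :=
          integral_inner (hZ1int.sub (integrable_const yb)) (gradient F yb)
    _ = 0 := by rw [h4, inner_zero_right]
  have hL : ∫ ω, breg F (Z1 ω) yb ∂μ = (∫ ω, F (Z1 ω) ∂μ) - F yb := by
    calc ∫ ω, breg F (Z1 ω) yb ∂μ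
        = (∫ ω, (F (Z1 ω) - F yb) ∂μ) - ∫ ω, ⟪gradient F yb, Z1 ω - yb⟫ ∂μ :=
          integral_sub hdiff hgi
    _ = (∫ ω, (F (Z1 ω) - F yb) ∂μ) := by rw [hzero, sub_zero]
    _ = (∫ ω, F (Z1 ω) ∂μ) - ∫ (_ : Ω), F yb ∂μ :=
          integral_sub intFZ1 (integrable_const (F yb))
    _ = (∫ ω, F (Z1 ω) ∂μ) - F yb := by rw [integral_const]; simp
  calc ∫ ω, breg F (Z1 ω) yb ∂μ = (∫ ω, F (Z1 ω) ∂μ) - F yb := hL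
  _ ≤ (∫ ω, F (Z2 ω) ∂μ) - F yb := by linarith

/-- sharpness is bounded by statistical information:
`SHARP_F(g) = E[D_F(E[Y|g(X)], E[Y])] ≤ E[F(E[Y|X])] − F(E[Y])`. -/
theorem sharpness_le_statistical_information
    {Ω 𝒳 : Type*} [MeasurableSpace Ω] [MeasurableSpace 𝒳]
    (μ : Measure Ω) [IsProbabilityMeasure μ] {k : ℕ}
    (X : Ω → 𝒳) (Y : Ω → EuclideanSpace ℝ (Fin k))
    (g : 𝒳 → EuclideanSpace ℝ (Fin k))
    (F : EuclideanSpace ℝ (Fin k) → ℝ)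
    (hX : Measurable X) (hY : Measurable Y) (hg : Measurable g)
    (hYoh : ∀ ω, ∃ i, Y ω = EuclideanSpace.single i 1)
    (hgs : ∀ x, g x ∈ simplexE k)
    (U : Set (EuclideanSpace ℝ (Fin k))) (hU : IsOpen U) (hUs : simplexE k ⊆ U)
    (hF : ConvexOn ℝ Set.univ F)
    (hFd : ∀ p ∈ U, DifferentiableAt ℝ F p)
    (hFc : ContinuousOn F (simplexE k))
    (hgFc : ContinuousOn (gradient F) (simplexE k)) :
    ∫ ω, breg F
        ((μ[Y | MeasurableSpace.comap (fun ω' => g (X ω')) inferInstance]) ω)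
        (∫ ω', Y ω' ∂μ) ∂μ
      ≤ (∫ ω, F ((μ[Y | MeasurableSpace.comap X inferInstance]) ω) ∂μ)
        - F (∫ ω', Y ω' ∂μ) := by
  have hm1 : MeasurableSpace.comap (fun ω' => g (X ω')) inferInstance
      ≤ ‹MeasurableSpace Ω› := (hg.comp hX).comap_le
  have hm2 : MeasurableSpace.comap X inferInstance ≤ ‹MeasurableSpace Ω› := hX.comap_le
  have hm12 : MeasurableSpace.comap (fun ω' => g (X ω')) inferInstance
      ≤ MeasurableSpace.comap X inferInstance := by
    have he : (fun ω' => g (X ω')) = g ∘ X := rfl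
    rw [he, ← MeasurableSpace.comap_comp]
    exact MeasurableSpace.comap_mono hg.comap_le
  exact aux_main μ hm1 hm2 hm12 Y F hY hYoh U hU hUs hF hFd hFc hgFc
end
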